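/- Let f(z) = ∑_{n≥0} a_n z^n be in the class K with radius of convergence R > 0; assume that f is not a polynomial and that M_f = lim_{t↑R} m_f(t) = +∞. Then limsup_{t↑R} σ_f(t)/m_f(t) ≥ (Ḡ(f) − 1)/(Ḡ(f) + 1); equivalently, for every real c ≥ 1 such that limsup_{k→∞} n_{k+1}/n_k ≥ c, one has limsup_{t↑R} σ_f(t)/m_f(t) ≥ (c − 1)/(c + 1). -/

import Mathlib

open Filter Topology MeasureTheory
open scoped ENNReal NNReal Classical

noncomputable section

/-- `psum a t = ∑ aₙ tⁿ`, the value `f(t)` of the power series with coefficients `a`. -/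
def psum (a : ℕ → ℝ) (t : ℝ) : ℝ := ∑' n : ℕ, a n * t ^ n

/-- The mean `m_f(t)` of the Khinchin family of the power series with coefficients `a`. -/
def meanK (a : ℕ → ℝ) (t : ℝ) : ℝ :=
  (∑' n : ℕ, (n : ℝ) * a n * t ^ n) / ∑' n : ℕ, a n * t ^ n

/-- The variance `σ_f²(t)` of the Khinchin family. -/
def varK (a : ℕ → ℝ) (t : ℝ) : ℝ :=
  (∑' n : ℕ, (n : ℝ) ^ 2 * a n * t ^ n) / (∑' n : ℕ, a n * t ^ n) - meanK a t ^ 2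

/-- The standard deviation `σ_f(t)` of the Khinchin family. -/
def sdK (a : ℕ → ℝ) (t : ℝ) : ℝ := Real.sqrt (varK a t)

/-- The moment `E(X_t^p)` of real exponent `p` of the Khinchin family. -/
def momK (a : ℕ → ℝ) (p : ℝ) (t : ℝ) : ℝ :=
  (∑' n : ℕ, (n : ℝ) ^ p * a n * t ^ n) / ∑' n : ℕ, a n * t ^ n

/-- The filter of `t ↑ R`: `atTop` when `R = ∞`, and `𝓝[<] R` when `R < ∞`. -/
def nhdsUpto (R : ℝ≥0∞) : Filter ℝ :=
  if R = ⊤ then atTop else nhdsWithin R.toReal (Set.Iio R.toReal)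

/- ### Auxiliary lemmas -/

lemma exists_between_ofReal {R : ℝ≥0∞} {t : ℝ} (ht : 0 ≤ t) (h : ENNReal.ofReal t < R) :
    ∃ t' : ℝ, t < t' ∧ ENNReal.ofReal t' < R := by
  obtain ⟨r', h1, h2⟩ := exists_between h
  have hr' : r' ≠ ⊤ := (h2.trans_le le_top).ne
  refine ⟨r'.toReal, ?_, ?_⟩
  · exact (ENNReal.ofReal_lt_iff_lt_toReal ht hr').mp h1
  · rwa [ENNReal.ofReal_toReal hr']

lemma summable_weight {a : ℕ → ℝ} {R : ℝ≥0∞} (hpos : ∀ n, 0 ≤ a n)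
    (hconv : ∀ t : ℝ, 0 ≤ t → ENNReal.ofReal t < R → Summable fun n => a n * t ^ n)
    (k : ℕ) {t : ℝ} (ht : 0 ≤ t) (htR : ENNReal.ofReal t < R) :
    Summable fun n : ℕ => (n : ℝ) ^ k * a n * t ^ n := by
  obtain ⟨t', htt', ht'R⟩ := exists_between_ofReal ht htR
  have ht'0 : 0 < t' := lt_of_le_of_lt ht htt'
  have hs := hconv t' ht'0.le ht'R
  set C := ∑' n, a n * t' ^ n with hC
  have hterm : ∀ n, a n * t' ^ n ≤ C := fun n =>
    Summable.le_tsum hs n (fun m _ => mul_nonneg (hpos m) (by positivity))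
  have hr : ‖t / t'‖ < 1 := by
    rw [Real.norm_eq_abs, abs_of_nonneg (div_nonneg ht ht'0.le)]
    exact (div_lt_one ht'0).mpr htt'
  have hgeo : Summable fun n : ℕ => (n : ℝ) ^ k * (t / t') ^ n :=
    summable_pow_mul_geometric_of_norm_lt_one k hr
  apply Summable.of_nonneg_of_le
    (fun n => mul_nonneg (mul_nonneg (by positivity) (hpos n)) (by positivity))
    (fun n => ?_) (hgeo.mul_left C)
  have hpow : t ^ n = t' ^ n * (t / t') ^ n := by
    have h0 : t' ^ n ≠ 0 := by positivity
    rw [div_pow, mul_div_assoc', mul_div_cancel_left₀ _ h0]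
  calc (n : ℝ) ^ k * a n * t ^ n = (a n * t' ^ n) * ((n : ℝ) ^ k * (t / t') ^ n) := by
        rw [hpow]; ring
    _ ≤ C * ((n : ℝ) ^ k * (t / t') ^ n) :=
        mul_le_mul_of_nonneg_right (hterm n) (by positivity)

lemma psum_pos {a : ℕ → ℝ} {R : ℝ≥0∞} (hpos : ∀ n, 0 ≤ a n) (ha0 : 0 < a 0)
    (hconv : ∀ t : ℝ, 0 ≤ t → ENNReal.ofReal t < R → Summable fun n => a n * t ^ n)
    {t : ℝ} (ht : 0 ≤ t) (htR : ENNReal.ofReal t < R) :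
    0 < ∑' n : ℕ, a n * t ^ n := by
  have h := Summable.le_tsum (hconv t ht htR) 0 (fun m _ => mul_nonneg (hpos m) (by positivity))
  simp only [pow_zero, mul_one] at h
  linarith

lemma contOn {b : ℕ → ℝ} (hb : ∀ n, 0 ≤ b n) {t1 : ℝ} (ht1 : 0 ≤ t1)
    (hs : Summable fun n : ℕ => b n * t1 ^ n) :
    ContinuousOn (fun t => ∑' n : ℕ, b n * t ^ n) (Set.Icc 0 t1) := by
  apply continuousOn_tsum (f := fun n t => b n * t ^ n) (u := fun n => b n * t1 ^ n)
    (fun n => (continuous_const.mul (continuous_pow n)).continuousOn) hs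
  intro n x hx
  rw [Real.norm_eq_abs, abs_of_nonneg (mul_nonneg (hb n) (pow_nonneg hx.1 n))]
  exact mul_le_mul_of_nonneg_left (pow_le_pow_left₀ hx.1 hx.2 n) (hb n)

lemma meanK_contOn {a : ℕ → ℝ} {R : ℝ≥0∞} (hpos : ∀ n, 0 ≤ a n) (ha0 : 0 < a 0)
    (hconv : ∀ t : ℝ, 0 ≤ t → ENNReal.ofReal t < R → Summable fun n => a n * t ^ n)
    {t1 : ℝ} (ht1 : 0 ≤ t1) (hR1 : ENNReal.ofReal t1 < R) :
    ContinuousOn (meanK a) (Set.Icc 0 t1) := by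
  have h1 : ContinuousOn (fun t => ∑' n : ℕ, (n : ℝ) * a n * t ^ n) (Set.Icc 0 t1) := by
    have := contOn (b := fun n => (n : ℝ) * a n) (fun n => mul_nonneg (by positivity) (hpos n))
      ht1 (by simpa using summable_weight hpos hconv 1 ht1 hR1)
    simpa [mul_assoc] using this
  have h0 : ContinuousOn (fun t => ∑' n : ℕ, a n * t ^ n) (Set.Icc 0 t1) :=
    contOn hpos ht1 (hconv t1 ht1 hR1)
  exact h1.div h0 (fun x hx => (psum_pos hpos ha0 hconv hx.1
    (lt_of_le_of_lt (ENNReal.ofReal_le_ofReal hx.2) hR1)).ne')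

lemma var_ge {a : ℕ → ℝ} {R : ℝ≥0∞} (hpos : ∀ n, 0 ≤ a n) (ha0 : 0 < a 0)
    (hconv : ∀ t : ℝ, 0 ≤ t → ENNReal.ofReal t < R → Summable fun n => a n * t ^ n)
    {t : ℝ} (ht : 0 ≤ t) (htR : ENNReal.ofReal t < R)
    {m n : ℕ} (hmn : m < n) (hgap : ∀ j, m < j → j < n → a j = 0)
    (hmean : meanK a t = ((m : ℝ) + n) / 2) :
    (((n : ℝ) - m) / 2) ^ 2 ≤ varK a t := by
  set μ : ℝ := ((m : ℝ) + n) / 2 with hμ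
  set D : ℝ := (((n : ℝ) - m) / 2) ^ 2 with hD
  have s0 : Summable fun k : ℕ => a k * t ^ k := hconv t ht htR
  have s1 : Summable fun k : ℕ => (k : ℝ) * a k * t ^ k := by
    simpa using summable_weight hpos hconv 1 ht htR
  have s2 : Summable fun k : ℕ => (k : ℝ) ^ 2 * a k * t ^ k :=
    summable_weight hpos hconv 2 ht htR
  have hS0 : 0 < ∑' k : ℕ, a k * t ^ k := psum_pos hpos ha0 hconv ht htR
  set S0 := ∑' k : ℕ, a k * t ^ k
  set S1 := ∑' k : ℕ, (k : ℝ) * a k * t ^ k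
  set S2 := ∑' k : ℕ, (k : ℝ) ^ 2 * a k * t ^ k
  have hS1 : S1 = μ * S0 := by
    have : S1 / S0 = μ := hmean
    field_simp at this
    linarith [this]
  have sq : Summable fun k : ℕ => ((k : ℝ) - μ) ^ 2 * a k * t ^ k := by
    have : Summable fun k : ℕ =>
        (k : ℝ) ^ 2 * a k * t ^ k - (2 * μ) * ((k : ℝ) * a k * t ^ k)
          + μ ^ 2 * (a k * t ^ k) :=
      (s2.sub (s1.mul_left (2 * μ))).add (s0.mul_left (μ ^ 2))
    exact this.congr (fun k => by ring)
  have hineq : ∀ k : ℕ, D * (a k * t ^ k) ≤ ((k : ℝ) - μ) ^ 2 * a k * t ^ k := by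
    intro k
    by_cases hak : a k = 0
    · simp [hak]
    · have hk : k ≤ m ∨ n ≤ k := by
        by_contra h
        push_neg at h
        exact hak (hgap k (by omega) (by omega))
      have hDle : D ≤ ((k : ℝ) - μ) ^ 2 := by
        have hmr : (m : ℝ) < n := by exact_mod_cast hmn
        rcases hk with hk | hk
        · have : (k : ℝ) ≤ m := by exact_mod_cast hk
          nlinarith
        · have : (n : ℝ) ≤ k := by exact_mod_cast hk
          nlinarith
      calc D * (a k * t ^ k) ≤ ((k : ℝ) - μ) ^ 2 * (a k * t ^ k) :=
            mul_le_mul_of_nonneg_right hDle (mul_nonneg (hpos k) (pow_nonneg ht k))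
        _ = ((k : ℝ) - μ) ^ 2 * a k * t ^ k := by ring
  have hts : D * S0 ≤ ∑' k : ℕ, ((k : ℝ) - μ) ^ 2 * a k * t ^ k := by
    calc D * S0 = ∑' k : ℕ, D * (a k * t ^ k) := (tsum_mul_left).symm
      _ ≤ _ := Summable.tsum_le_tsum hineq (s0.mul_left D) sq
  have hexp : (∑' k : ℕ, ((k : ℝ) - μ) ^ 2 * a k * t ^ k)
      = S2 - 2 * μ * S1 + μ ^ 2 * S0 := by
    have h1 : (∑' k : ℕ, ((k : ℝ) - μ) ^ 2 * a k * t ^ k)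
        = ∑' k : ℕ, ((k : ℝ) ^ 2 * a k * t ^ k - (2 * μ) * ((k : ℝ) * a k * t ^ k)
            + μ ^ 2 * (a k * t ^ k)) :=
      tsum_congr (fun k => by ring)
    rw [h1, Summable.tsum_add (s2.sub (s1.mul_left (2 * μ))) (s0.mul_left (μ ^ 2)),
      Summable.tsum_sub s2 (s1.mul_left (2 * μ)), tsum_mul_left, tsum_mul_left]
  rw [hexp, hS1] at hts
  have hvar : varK a t = S2 / S0 - μ ^ 2 := by
    rw [varK, hmean]
  rw [hvar, le_sub_iff_add_le, le_div_iff₀ hS0]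
  nlinarith [hts]

lemma main_point {a : ℕ → ℝ} {R : ℝ≥0∞} (hpos : ∀ n, 0 ≤ a n) (ha0 : 0 < a 0)
    (hconv : ∀ t : ℝ, 0 ≤ t → ENNReal.ofReal t < R → Summable fun n => a n * t ^ n)
    {t0 t1 : ℝ} (h00 : 0 < t0) (h01 : t0 ≤ t1) (hR1 : ENNReal.ofReal t1 < R)
    {m n : ℕ} (hm : 1 ≤ m) (hmn : m < n) (hgap : ∀ j, m < j → j < n → a j = 0)
    (hV0 : meanK a t0 ≤ ((m : ℝ) + n) / 2) (hV1 : ((m : ℝ) + n) / 2 ≤ meanK a t1)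
    {c' : ℝ} (hc'1 : 0 < c' + 1) (hc' : c' * m ≤ n) :
    ∃ τ ∈ Set.Icc t0 t1, (c' - 1) / (c' + 1) ≤ sdK a τ / meanK a τ := by
  have hcont := meanK_contOn hpos ha0 hconv (le_trans h00.le h01) hR1
  obtain ⟨τ, hτ, hμ⟩ := intermediate_value_Icc h01
    (hcont.mono (Set.Icc_subset_Icc_left h00.le)) ⟨hV0, hV1⟩
  have hτ0 : 0 < τ := lt_of_lt_of_le h00 hτ.1
  have hτR : ENNReal.ofReal τ < R := lt_of_le_of_lt (ENNReal.ofReal_le_ofReal hτ.2) hR1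
  have hvar := var_ge hpos ha0 hconv hτ0.le hτR hmn hgap hμ
  have hmr : (m : ℝ) < n := by exact_mod_cast hmn
  have hm1 : (1 : ℝ) ≤ m := by exact_mod_cast hm
  have hsd : ((n : ℝ) - m) / 2 ≤ sdK a τ := by
    rw [sdK]
    exact (Real.le_sqrt (by linarith) (le_trans (by positivity) hvar)).mpr hvar
  have hμpos : 0 < meanK a τ := by rw [hμ]; linarith
  refine ⟨τ, hτ, ?_⟩
  have step1 : (((n : ℝ) - m) / 2) / meanK a τ ≤ sdK a τ / meanK a τ := by
    gcongr
  have step2 : (c' - 1) / (c' + 1) ≤ (((n : ℝ) - m) / 2) / meanK a τ := by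
    rw [hμ]
    rcases le_or_gt c' 1 with h1 | h1
    · have hL : (c' - 1) / (c' + 1) ≤ 0 :=
        div_nonpos_of_nonpos_of_nonneg (by linarith) hc'1.le
      have hRn : (0 : ℝ) ≤ (((n : ℝ) - m) / 2) / (((m : ℝ) + n) / 2) :=
        div_nonneg (by linarith) (by linarith)
      linarith
    · rw [div_le_div_iff₀ hc'1 (by linarith)]
      nlinarith
  linarith

/-- Theorem 2.4.4. Let `f ∈ K` with radius of convergence `R > 0`, not a
polynomial, with `M_f = +∞`. For every real `c ≥ 1` such that `limsup_k n_{k+1}/n_k ≥ c`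
(expressed below: for every `ε > 0` there are arbitrarily far out consecutive nonzero
indices `m < n` with `n ≥ (c-ε)·m`), one has
`limsup_{t↑R} σ_f(t)/m_f(t) ≥ (c-1)/(c+1)` (limsup taken in `EReal`). -/
theorem statement6 (a : ℕ → ℝ) (R : ℝ≥0∞) (hR : 0 < R)
    (hpos : ∀ n, 0 ≤ a n) (ha0 : 0 < a 0) (ha1 : ∃ n, 1 ≤ n ∧ 0 < a n)
    (hconv : ∀ t : ℝ, 0 ≤ t → ENNReal.ofReal t < R → Summable fun n => a n * t ^ n)
    (hdiv : ∀ t : ℝ, R < ENNReal.ofReal t → ¬ Summable fun n => a n * t ^ n)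
    (hnotpoly : ¬ ∃ N : ℕ, ∀ n, N < n → a n = 0)
    (hM : Tendsto (meanK a) (nhdsUpto R) atTop) :
    ∀ c : ℝ, 1 ≤ c →
      (∀ ε : ℝ, 0 < ε → ∀ N : ℕ, ∃ m n : ℕ, N ≤ m ∧ m < n ∧ a m ≠ 0 ∧ a n ≠ 0 ∧
          (∀ j, m < j → j < n → a j = 0) ∧ (c - ε) * (m : ℝ) ≤ (n : ℝ)) →
      (((c - 1) / (c + 1) : ℝ) : EReal) ≤
        Filter.limsup (fun t : ℝ => ((sdK a t / meanK a t : ℝ) : EReal)) (nhdsUpto R) := by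
  intro c hc hfreq
  set u : ℝ → EReal := fun t => ((sdK a t / meanK a t : ℝ) : EReal) with hu
  have key : ∀ ε : ℝ, ε ∈ Set.Ioo (0 : ℝ) 1 →
      (((c - ε - 1) / (c - ε + 1) : ℝ) : EReal) ≤ Filter.limsup u (nhdsUpto R) := by
    intro ε hε
    set c' : ℝ := c - ε with hc'
    have hc'1 : 0 < c' + 1 := by
      have := hε.2
      simp only [hc']
      linarith
    apply le_limsup_of_frequently_le (hu_le := Filter.isBoundedUnder_of ⟨⊤, fun x => le_top⟩)
    rw [Filter.frequently_iff]
    intro S hS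
    by_cases hRT : R = ⊤
    · -- infinite radius: nhdsUpto R = atTop
      have hF : nhdsUpto R = atTop := by rw [nhdsUpto, if_pos hRT]
      rw [hF] at hS
      obtain ⟨T, hT⟩ := mem_atTop_sets.mp hS
      set t0 : ℝ := max T 1 with ht0def
      have ht0 : 0 < t0 := lt_of_lt_of_le one_pos (le_max_right _ _)
      set N : ℕ := ⌈meanK a t0⌉₊ + 1 with hN
      obtain ⟨m, n, hNm, hmn, ham, han, hgap, hcn⟩ := hfreq ε hε.1 N
      have hm1 : 1 ≤ m := le_trans (by omega) hNm
      have hmr : (m : ℝ) < n := by exact_mod_cast hmn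
      have hNmr : (N : ℝ) ≤ m := by exact_mod_cast hNm
      have hNr : meanK a t0 ≤ (N : ℝ) := by
        have h1 := Nat.le_ceil (meanK a t0)
        have h2 : ((⌈meanK a t0⌉₊ : ℝ)) ≤ N := by
          rw [hN]; push_cast; linarith
        linarith
      have hV0 : meanK a t0 ≤ ((m : ℝ) + n) / 2 := by linarith
      have hM' : Tendsto (meanK a) atTop atTop := hF ▸ hM
      obtain ⟨T2, hT2⟩ := eventually_atTop.mp
        (hM'.eventually (eventually_ge_atTop (((m : ℝ) + n) / 2)))
      set t1 : ℝ := max t0 T2 with ht1def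
      have h01 : t0 ≤ t1 := le_max_left _ _
      have hV1 : ((m : ℝ) + n) / 2 ≤ meanK a t1 := hT2 t1 (le_max_right _ _)
      have hR1 : ENNReal.ofReal t1 < R := by rw [hRT]; exact ENNReal.ofReal_lt_top
      obtain ⟨τ, hτ, hτle⟩ := main_point hpos ha0 hconv ht0 h01 hR1 hm1 hmn hgap hV0 hV1
        hc'1 hcn
      refine ⟨τ, hT τ (le_trans (le_trans (le_max_left T 1) hτ.1) le_rfl), ?_⟩
      exact EReal.coe_le_coe_iff.mpr hτle
    · -- finite radius: nhdsUpto R = 𝓝[<] R.toReal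
      have hF : nhdsUpto R = nhdsWithin R.toReal (Set.Iio R.toReal) := by
        rw [nhdsUpto, if_neg hRT]
      set r : ℝ := R.toReal with hrdef
      have hr : 0 < r := ENNReal.toReal_pos hR.ne' hRT
      rw [hF] at hS
      obtain ⟨l, hl, hIoo⟩ := mem_nhdsLT_iff_exists_Ioo_subset.mp hS
      set l' : ℝ := max l (r / 2) with hl'def
      have hl'r : l' < r := max_lt hl (by linarith)
      have hl'0 : 0 ≤ l' := le_trans (by linarith) (le_max_right _ _)
      set t0 : ℝ := (l' + r) / 2 with ht0def
      have ht0l' : l' < t0 := by rw [ht0def]; linarith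
      have ht0r : t0 < r := by rw [ht0def]; linarith
      have ht0 : 0 < t0 := lt_of_le_of_lt hl'0 ht0l'
      set N : ℕ := ⌈meanK a t0⌉₊ + 1 with hN
      obtain ⟨m, n, hNm, hmn, ham, han, hgap, hcn⟩ := hfreq ε hε.1 N
      have hm1 : 1 ≤ m := le_trans (by omega) hNm
      have hmr : (m : ℝ) < n := by exact_mod_cast hmn
      have hNmr : (N : ℝ) ≤ m := by exact_mod_cast hNm
      have hNr : meanK a t0 ≤ (N : ℝ) := by
        have h1 := Nat.le_ceil (meanK a t0)
        have h2 : ((⌈meanK a t0⌉₊ : ℝ)) ≤ N := by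
          rw [hN]; push_cast; linarith
        linarith
      have hV0 : meanK a t0 ≤ ((m : ℝ) + n) / 2 := by linarith
      have hM' : Tendsto (meanK a) (nhdsWithin r (Set.Iio r)) atTop := hF ▸ hM
      have hEv : ∀ᶠ t in nhdsWithin r (Set.Iio r), ((m : ℝ) + n) / 2 ≤ meanK a t :=
        hM'.eventually (eventually_ge_atTop _)
      obtain ⟨l2, hl2, hIoo2⟩ := mem_nhdsLT_iff_exists_Ioo_subset.mp hEv
      set w : ℝ := max t0 l2 with hwdef
      have hwr : w < r := max_lt ht0r hl2
      set t1 : ℝ := (w + r) / 2 with ht1def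
      have ht1w : w < t1 := by rw [ht1def]; linarith
      have ht1r : t1 < r := by rw [ht1def]; linarith
      have h01 : t0 ≤ t1 := le_trans (le_max_left _ _) ht1w.le
      have hV1 : ((m : ℝ) + n) / 2 ≤ meanK a t1 :=
        hIoo2 ⟨lt_of_le_of_lt (le_max_right _ _) ht1w, ht1r⟩
      have hR1 : ENNReal.ofReal t1 < R := by
        rw [ENNReal.ofReal_lt_iff_lt_toReal (le_trans ht0.le h01) hRT]
        exact ht1r
      obtain ⟨τ, hτ, hτle⟩ := main_point hpos ha0 hconv ht0 h01 hR1 hm1 hmn hgap hV0 hV1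
        hc'1 hcn
      have hτS : τ ∈ S := by
        apply hIoo
        constructor
        · exact lt_of_le_of_lt (le_max_left l (r / 2)) (lt_of_lt_of_le ht0l' hτ.1)
        · exact lt_of_le_of_lt hτ.2 ht1r
      exact ⟨τ, hτS, EReal.coe_le_coe_iff.mpr hτle⟩
  -- pass to the limit ε → 0⁺
  have hcont : ContinuousAt (fun ε : ℝ => (c - ε - 1) / (c - ε + 1)) 0 := by
    apply ContinuousAt.div (by fun_prop) (by fun_prop)
    norm_num
    linarith
  have hval : (c - (0 : ℝ) - 1) / (c - (0 : ℝ) + 1) = (c - 1) / (c + 1) := by norm_num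
  have htend : Tendsto (fun ε : ℝ => (((c - ε - 1) / (c - ε + 1) : ℝ) : EReal))
      (nhdsWithin (0 : ℝ) (Set.Ioi 0)) (nhds (((c - 1) / (c + 1) : ℝ) : EReal)) := by
    have h1 : Tendsto (fun ε : ℝ => (c - ε - 1) / (c - ε + 1)) (nhds (0 : ℝ))
        (nhds ((c - 1) / (c + 1))) := by
      have := hcont.tendsto
      rwa [hval] at this
    exact (continuous_coe_real_ereal.tendsto _).comp (h1.mono_left nhdsWithin_le_nhds)
  refine le_of_tendsto htend ?_
  filter_upwards [Ioo_mem_nhdsGT_of_mem (Set.left_mem_Ico.mpr one_pos)] with ε hε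
  exact key ε hε
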